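/- Let (Ω,ℱ) be a measurable space, E and F countable sets with their discrete σ-algebras, Y : Ω → E and Z : Ω → F measurable maps, R a probability measure on Ω, and 𝒢 ⊆ ℱ a sub-σ-algebra with respect to which both Y and Z are measurable. Let B ∈ ℱ and assume that for every G ∈ 𝒢: R(B ∩ G) = ∑_{e ∈ E : R(Y=e)>0} R(B | {Y=e})·R(G ∩ {Y=e}). Let π : F → [0,1] with ∑_{f∈F} π(f) = 1 and with π(f) > 0 implying R(Z=f) > 0, and define the probability measure P := ∑_{f : π(f)>0} π(f)·R(· | {Z=f}). Then for every e ∈ E with P(Y=e) > 0 one has R(Y=e) > 0 and P(B | {Y=e}) = R(B | {Y=e}). -/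

import Mathlib

open MeasureTheory ProbabilityTheory
open scoped NNReal ENNReal

/-- Let `Y : Ω → E`, `Z : Ω → F` with `E`, `F` countable, let `𝒢` be a
sub-σ-algebra with respect to which `Y` and `Z` are measurable, and let `B` be an event such
that `R(B ∩ G) = ∑_{e : R(Y=e)>0} R(B | Y=e)·R(G ∩ {Y=e})` for every `G ∈ 𝒢` (the conditional
probability of `B` given `𝒢` only depends on `Y`).  If `P := ∑_f π(f)·R(· | Z=f)` is a
mixture of the `Z`-conditionings of `R` (with mixing weights `π`, `∑ π(f) = 1`, and
`π(f) > 0 ⇒ R(Z=f) > 0`; the terms with `π(f) = 0` vanish), then for every `e` with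
`P(Y=e) > 0` one has `R(Y=e) > 0` and `P(B | Y=e) = R(B | Y=e)`. -/
theorem stmt19 {Ω : Type*} [m0 : MeasurableSpace Ω]
    {E F : Type*} [MeasurableSpace E] [MeasurableSingletonClass E] [Countable E]
    [MeasurableSpace F] [MeasurableSingletonClass F] [Countable F]
    (Y : Ω → E) (Z : Ω → F) (R : Measure Ω) [IsProbabilityMeasure R]
    (hY : Measurable[m0] Y) (hZ : Measurable[m0] Z)
    (B : Set Ω) (hB : MeasurableSet[m0] B)
    (𝒢 : MeasurableSpace Ω) (h𝒢 : 𝒢 ≤ m0)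
    (hY𝒢 : Measurable[𝒢] Y) (hZ𝒢 : Measurable[𝒢] Z)
    (hrec : ∀ G : Set Ω, MeasurableSet[𝒢] G →
      R (B ∩ G) = ∑' e : {e : E // 0 < R (Y ⁻¹' {e})},
        ProbabilityTheory.cond R (Y ⁻¹' {e.1}) B * R (G ∩ Y ⁻¹' {e.1}))
    (π : F → ℝ≥0∞) (hπ₁ : ∀ f, π f ≤ 1) (hπsum : ∑' f, π f = 1)
    (hπsupp : ∀ f : F, 0 < π f → 0 < R (Z ⁻¹' {f})) :
    let P : @Measure Ω m0 :=
      Measure.sum (fun f : F => π f • ProbabilityTheory.cond R (Z ⁻¹' {f}))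
    ∀ e : E, 0 < P (Y ⁻¹' {e}) →
      0 < R (Y ⁻¹' {e}) ∧
      ProbabilityTheory.cond P (Y ⁻¹' {e}) B = ProbabilityTheory.cond R (Y ⁻¹' {e}) B := by
  intro P e hPe
  set Ae : Set Ω := Y ⁻¹' {e} with hAedef
  have hAe : MeasurableSet[m0] Ae := hY (measurableSet_singleton e)
  have hZf : ∀ f : F, MeasurableSet[m0] (Z ⁻¹' {f}) :=
    fun f => hZ (measurableSet_singleton f)
  have hPapp : ∀ (A : Set Ω), MeasurableSet[m0] A →
      P A = ∑' f : F, π f * ((R (Z ⁻¹' {f}))⁻¹ * R (Z ⁻¹' {f} ∩ A)) := by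
    intro A hA
    rw [Measure.sum_apply _ hA]
    refine tsum_congr fun f => ?_
    rw [Measure.smul_apply, smul_eq_mul, ProbabilityTheory.cond_apply (hZf f)]
  -- Step 1 : R Ae > 0
  have hRe : 0 < R Ae := by
    by_contra h
    push_neg at h
    have hR0 : R Ae = 0 := le_antisymm h (zero_le)
    have : P Ae = 0 := by
      rw [hPapp Ae hAe]
      refine ENNReal.tsum_eq_zero.2 fun f => ?_
      have : R (Z ⁻¹' {f} ∩ Ae) = 0 :=
        le_antisymm (hR0 ▸ measure_mono Set.inter_subset_right) (zero_le)
      simp [this]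
    exact absurd this hPe.ne'
  set c : ℝ≥0∞ := ProbabilityTheory.cond R Ae B with hcdef
  -- Key: for every f, R (Zf ∩ (B ∩ Ae)) = c * R (Zf ∩ Ae)
  have hkey : ∀ f : F, R (Z ⁻¹' {f} ∩ (B ∩ Ae)) = c * R (Z ⁻¹' {f} ∩ Ae) := by
    intro f
    set G : Set Ω := Ae ∩ Z ⁻¹' {f} with hGdef
    have hG𝒢 : MeasurableSet[𝒢] G :=
      (hY𝒢 (measurableSet_singleton e)).inter (hZ𝒢 (measurableSet_singleton f))
    have h1 : R (B ∩ G) = c * R G := by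
      rw [hrec G hG𝒢]
      rw [tsum_eq_single (⟨e, hRe⟩ : {e : E // 0 < R (Y ⁻¹' {e})})]
      · have : G ∩ Y ⁻¹' {e} = G := by
          ext ω; simp [hGdef, hAedef]; tauto
        rw [this]
      · intro b hb
        have hbe : b.1 ≠ e := fun h => hb (Subtype.ext h)
        have : G ∩ Y ⁻¹' {b.1} = ∅ := by
          ext ω
          simp only [hGdef, hAedef, Set.mem_inter_iff, Set.mem_preimage,
            Set.mem_singleton_iff, Set.mem_empty_iff_false, iff_false]
          rintro ⟨⟨h1, -⟩, h2⟩
          exact hbe (h2.symm.trans h1)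
        simp [this]
    have h2 : Z ⁻¹' {f} ∩ (B ∩ Ae) = B ∩ G := by
      ext ω; simp [hGdef]; tauto
    have h3 : Z ⁻¹' {f} ∩ Ae = G := by
      ext ω; simp [hGdef]; tauto
    rw [h2, h3, h1]
  -- P (B ∩ Ae) = c * P Ae
  have hPB : P (B ∩ Ae) = c * P Ae := by
    rw [hPapp (B ∩ Ae) (hB.inter hAe), hPapp Ae hAe, ← ENNReal.tsum_mul_left]
    refine tsum_congr fun f => ?_
    rw [hkey f]
    ring
  -- P Ae ≤ 1
  have hPle : P Ae ≤ 1 := by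
    rw [hPapp Ae hAe, ← hπsum]
    refine ENNReal.tsum_le_tsum fun f => ?_
    have hterm : (R (Z ⁻¹' {f}))⁻¹ * R (Z ⁻¹' {f} ∩ Ae) ≤ 1 := by
      rcases eq_or_ne (R (Z ⁻¹' {f})) 0 with h0 | h0
      · have : R (Z ⁻¹' {f} ∩ Ae) = 0 :=
          le_antisymm (h0 ▸ measure_mono Set.inter_subset_left) (zero_le)
        simp [this]
      · calc (R (Z ⁻¹' {f}))⁻¹ * R (Z ⁻¹' {f} ∩ Ae)
            ≤ (R (Z ⁻¹' {f}))⁻¹ * R (Z ⁻¹' {f}) :=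
              mul_le_mul_right (measure_mono Set.inter_subset_left) _
          _ = 1 := ENNReal.inv_mul_cancel h0 (measure_ne_top R _)
    calc π f * ((R (Z ⁻¹' {f}))⁻¹ * R (Z ⁻¹' {f} ∩ Ae)) ≤ π f * 1 :=
          mul_le_mul_right hterm _
      _ = π f := mul_one _
  have hPne : P Ae ≠ ∞ := (lt_of_le_of_lt hPle ENNReal.one_lt_top).ne
  refine ⟨hRe, ?_⟩
  rw [ProbabilityTheory.cond_apply hAe, Set.inter_comm Ae B, hPB, mul_comm c,
    ← mul_assoc, ENNReal.inv_mul_cancel hPe.ne' hPne, one_mul]
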